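/- There exist constants c > 0 and n₀ ∈ ℕ such that for all n ≥ n₀, all reals ε with 0 < ε ≤ 1/6, every set M ⊆ [n] with |M| = t, every set A ⊆ [n]∖M, and every set V ⊆ M ∪ A with V ∩ M ≠ ∅, the following holds: if f is the random Boolean function obtained by sampling, independently for each i ∈ [N], a set S_i ⊆ A (including each element of A independently with probability ε/√n) and a uniformly random function h_i depending only on the coordinates in S_i (i.e., h_i(x) = z_i(x|_{S_i}) for independent uniform bits z_i(b), b ∈ {0,1}^{S_i}), and setting f(x) = h_{Γ_M(x)}(x), then Pr[E_V(f) ≥ 2^n/5] ≥ 1 − exp(−2^{cn}). -/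

import Mathlib

open Finset

/-- `f : {0,1}^n → {0,1}` is a `k`-junta: there is a set `S ⊆ [n]` with `|S| ≤ k`
such that `f x = f y` whenever `x` and `y` agree on all coordinates in `S`. -/
def IsJunta (n k : ℕ) (f : (Fin n → Bool) → Bool) : Prop :=
  ∃ S : Finset (Fin n), S.card ≤ k ∧
    ∀ x y : Fin n → Bool, (∀ i ∈ S, x i = y i) → f x = f y

/-- `f` is `ε`-far from every `k`-junta. -/
def FarFromJuntas (n k : ℕ) (ε : ℝ) (f : (Fin n → Bool) → Bool) : Prop :=
  ∀ g : (Fin n → Bool) → Bool, IsJunta n k g →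
    ε * 2 ^ n ≤ ((Finset.univ.filter (fun x => f x ≠ g x)).card : ℝ)

/-- Probability of obtaining exactly the subset `A` when each element of `U` is included
independently with probability `ρ` (and elements outside `U` are never included). -/
noncomputable def pSet {ι : Type*} [DecidableEq ι] (U : Finset ι) (ρ : ℝ) (A : Finset ι) : ℝ :=
  if A ⊆ U then ρ ^ A.card * (1 - ρ) ^ (U.card - A.card) else 0

/-- Zero out the coordinates outside `M`.  Two strings have the same `padTo M` iff they
agree on all coordinates of `M`, so `padTo M x` serves as the index `Γ_M(x)`:
it identifies the restriction `x|_M`. -/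
def padTo {n : ℕ} (M : Finset (Fin n)) (x : Fin n → Bool) : Fin n → Bool :=
  fun j => if j ∈ M then x j else false

/-- The function `f = f_{M,S,H}` built from the addressing set `M`, the family of subsets
`S_i ⊆ A` and the family of random functions `h_i(x) = z_i(x|_{S_i})`: on input `x`, the
index `i = Γ_M(x)` (represented by `padTo M x`) selects `S_i` and `z_i`, and the value is
`z_i` evaluated at the restriction of `x` to `S_i` (represented by `padTo (S i) x`). -/
def buildF {n : ℕ} (M : Finset (Fin n)) (S : (Fin n → Bool) → Finset (Fin n))
    (z : (Fin n → Bool) → (Fin n → Bool) → Bool) : (Fin n → Bool) → Bool :=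
  fun x => z (padTo M x) (padTo (S (padTo M x)) x)

open Classical in
/-- The probability, for fixed `M` and `A`, that the random function `f` obtained by
sampling each `S_i ⊆ A` (elements included independently with probability `ρ`) and
each `h_i` a uniformly random function of the coordinates in `S_i`, satisfies `E f`. -/
noncomputable def prSH (n : ℕ) (M A : Finset (Fin n)) (ρ : ℝ)
    (E : ((Fin n → Bool) → Bool) → Prop) : ℝ :=
  ∑ S : (Fin n → Bool) → Finset (Fin n),
    ∑ z : (Fin n → Bool) → (Fin n → Bool) → Bool,
      (if E (buildF M S z) then 1 else 0) * (∏ y : Fin n → Bool, pSet A ρ (S y)) /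
        (Fintype.card ((Fin n → Bool) → (Fin n → Bool) → Bool) : ℝ)

/-- The probability that a random function `f` drawn from the distribution `D` (with
`M` a uniformly random subset of `[n]` of size `t`, `A ⊆ [n]∖M` with each element
included independently with probability `ρA`, each `S_i ⊆ A` with rate `ρS`, and each
`h_i` a uniformly random function of the coordinates in `S_i`) satisfies `E f`.
Taking `ρA = 1/2` gives `D_yes`; taking `ρA = 1/2 + (log₂ n)/√n` gives `D_no`. -/
noncomputable def prD (n t : ℕ) (ρA ρS : ℝ)
    (E : ((Fin n → Bool) → Bool) → Prop) : ℝ :=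
  (∑ M ∈ Finset.univ.filter (fun M : Finset (Fin n) => M.card = t),
    ∑ A : Finset (Fin n), pSet Mᶜ ρA A * prSH n M A ρS E) / (n.choose t : ℝ)

/-- Flip the `ℓ`-th coordinate of `x`; the pair `(x, flipAt x ℓ)` is the edge of the
hypercube along direction `ℓ` with endpoint `x`. -/
def flipAt {n : ℕ} (x : Fin n → Bool) (ℓ : Fin n) : Fin n → Bool :=
  Function.update x ℓ (!x ℓ)

/-- `C` is a collection of pairwise vertex-disjoint `f`-bichromatic edges along
directions in `V`: each element `(x, ℓ)` of `C` represents the edge `(x, x^(ℓ))`. -/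
def DisjointBichromatic {n : ℕ} (f : (Fin n → Bool) → Bool) (V : Finset (Fin n))
    (C : Finset ((Fin n → Bool) × Fin n)) : Prop :=
  (∀ e ∈ C, e.2 ∈ V ∧ f e.1 ≠ f (flipAt e.1 e.2)) ∧
  ∀ e ∈ C, ∀ e' ∈ C, e ≠ e' →
    e.1 ≠ e'.1 ∧ e.1 ≠ flipAt e'.1 e'.2 ∧
    flipAt e.1 e.2 ≠ e'.1 ∧ flipAt e.1 e.2 ≠ flipAt e'.1 e'.2

lemma rad_count {κ : Type*} [Fintype κ] [DecidableEq κ]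
    (d : κ → ℝ) (s D : ℝ) (hs : 0 < s) (hD : 0 < D) (hsum : ∑ k, d k ^ 2 ≤ D) :
    ((univ.filter (fun w : κ → Bool =>
        ∑ k, d k * (if w k then 1 else -1) ≤ -s)).card : ℝ) ≤
      (Fintype.card (κ → Bool) : ℝ) * Real.exp (-(s ^ 2) / (2 * D)) := by
  set L := s / D with hL
  have hLpos : 0 < L := div_pos hs hD
  have key : ∀ w : κ → Bool, (∑ k, d k * (if w k then 1 else -1) ≤ -s) →
      (1 : ℝ) ≤ Real.exp (-(L * s)) * Real.exp (-(L * ∑ k, d k * (if w k then 1 else -1))) := by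
    intro w hw
    rw [← Real.exp_add]
    have h2 : L * ∑ k, d k * (if w k then 1 else -1) ≤ L * (-s) :=
      mul_le_mul_of_nonneg_left hw hLpos.le
    have : (0:ℝ) ≤ -(L * s) + -(L * ∑ k, d k * (if w k then 1 else -1)) := by nlinarith
    calc (1:ℝ) = Real.exp 0 := Real.exp_zero.symm
    _ ≤ _ := Real.exp_le_exp.mpr this
  have step1 : ((univ.filter (fun w : κ → Bool =>
        ∑ k, d k * (if w k then 1 else -1) ≤ -s)).card : ℝ) ≤
      ∑ w : κ → Bool, Real.exp (-(L * s)) * Real.exp (-(L * ∑ k, d k * (if w k then 1 else -1))) := by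
    have h1 : ((univ.filter (fun w : κ → Bool =>
        ∑ k, d k * (if w k then 1 else -1) ≤ -s)).card : ℝ) =
        ∑ w ∈ univ.filter (fun w : κ → Bool =>
          ∑ k, d k * (if w k then 1 else -1) ≤ -s), (1:ℝ) := by
      rw [Finset.sum_const, nsmul_eq_mul, mul_one]
    rw [h1]
    calc ∑ w ∈ univ.filter (fun w : κ → Bool =>
          ∑ k, d k * (if w k then 1 else -1) ≤ -s), (1:ℝ)
        ≤ ∑ w ∈ univ.filter (fun w : κ → Bool =>
          ∑ k, d k * (if w k then 1 else -1) ≤ -s),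
            Real.exp (-(L * s)) * Real.exp (-(L * ∑ k, d k * (if w k then 1 else -1))) := by
          refine Finset.sum_le_sum fun w hw => ?_
          exact key w (by simpa using hw)
      _ ≤ ∑ w : κ → Bool, Real.exp (-(L * s)) * Real.exp (-(L * ∑ k, d k * (if w k then 1 else -1))) := by
          refine Finset.sum_le_sum_of_subset_of_nonneg (Finset.filter_subset _ _) fun w _ _ => ?_
          positivity
  have step2 : ∑ w : κ → Bool, Real.exp (-(L * ∑ k, d k * (if w k then 1 else -1))) =
      ∏ k : κ, (Real.exp (-(L * d k)) + Real.exp (L * d k)) := by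
    have h0 : ∀ w : κ → Bool, Real.exp (-(L * ∑ k, d k * (if w k then 1 else -1))) =
        ∏ k : κ, Real.exp (-(L * (d k * (if w k then 1 else -1)))) := by
      intro w
      rw [← Real.exp_sum]
      congr 1
      rw [Finset.mul_sum, ← Finset.sum_neg_distrib]
    simp_rw [h0]
    rw [← Fintype.prod_sum (fun k (b : Bool) => Real.exp (-(L * (d k * (if b then 1 else -1)))))]
    refine Finset.prod_congr rfl fun k _ => ?_
    rw [Fintype.sum_bool]
    norm_num
  have step3 : ∏ k : κ, (Real.exp (-(L * d k)) + Real.exp (L * d k)) ≤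
      (Fintype.card (κ → Bool) : ℝ) * Real.exp (L ^ 2 * (∑ k, d k ^ 2) / 2) := by
    have h1 : ∀ k : κ, Real.exp (-(L * d k)) + Real.exp (L * d k) ≤
        2 * Real.exp ((L * d k) ^ 2 / 2) := by
      intro k
      have := Real.cosh_le_exp_half_sq (L * d k)
      rw [Real.cosh_eq] at this
      nlinarith [this]
    calc ∏ k : κ, (Real.exp (-(L * d k)) + Real.exp (L * d k))
        ≤ ∏ k : κ, 2 * Real.exp ((L * d k) ^ 2 / 2) := by
          refine Finset.prod_le_prod (fun k _ => by positivity) fun k _ => h1 k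
      _ = 2 ^ (Fintype.card κ) * Real.exp (∑ k, (L * d k) ^ 2 / 2) := by
          rw [Finset.prod_mul_distrib, Finset.prod_const, Real.exp_sum]
          simp [Finset.card_univ]
      _ = (Fintype.card (κ → Bool) : ℝ) * Real.exp (L ^ 2 * (∑ k, d k ^ 2) / 2) := by
          rw [Fintype.card_fun]
          congr 1
          · simp [Fintype.card_bool]
          · congr 1
            simp_rw [mul_pow]
            rw [← Finset.sum_div, ← Finset.mul_sum]
  calc ((univ.filter (fun w : κ → Bool =>
        ∑ k, d k * (if w k then 1 else -1) ≤ -s)).card : ℝ)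
      ≤ ∑ w : κ → Bool, Real.exp (-(L * s)) * Real.exp (-(L * ∑ k, d k * (if w k then 1 else -1))) := step1
    _ = Real.exp (-(L * s)) * ∑ w : κ → Bool, Real.exp (-(L * ∑ k, d k * (if w k then 1 else -1))) := by
        rw [Finset.mul_sum]
    _ = Real.exp (-(L * s)) * ∏ k : κ, (Real.exp (-(L * d k)) + Real.exp (L * d k)) := by rw [step2]
    _ ≤ Real.exp (-(L * s)) * ((Fintype.card (κ → Bool) : ℝ) * Real.exp (L ^ 2 * (∑ k, d k ^ 2) / 2)) := by
        exact mul_le_mul_of_nonneg_left step3 (Real.exp_nonneg _)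
    _ ≤ Real.exp (-(L * s)) * ((Fintype.card (κ → Bool) : ℝ) * Real.exp (L ^ 2 * D / 2)) := by
        have : Real.exp (L ^ 2 * (∑ k, d k ^ 2) / 2) ≤ Real.exp (L ^ 2 * D / 2) := by
          apply Real.exp_le_exp.mpr
          have : L ^ 2 * (∑ k, d k ^ 2) ≤ L ^ 2 * D := mul_le_mul_of_nonneg_left hsum (sq_nonneg L)
          linarith
        have h2 : (0:ℝ) ≤ (Fintype.card (κ → Bool) : ℝ) := Nat.cast_nonneg _
        exact mul_le_mul_of_nonneg_left (mul_le_mul_of_nonneg_left this h2) (Real.exp_nonneg _)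
    _ = (Fintype.card (κ → Bool) : ℝ) * Real.exp (-(s ^ 2) / (2 * D)) := by
        rw [mul_comm (Real.exp _), mul_assoc, ← Real.exp_add]
        congr 2
        rw [hL]
        field_simp
        ring

lemma count_main {X κ : Type*} [Fintype X] [Fintype κ] [DecidableEq κ]
    (p : X → Prop) [DecidablePred p] (key : X → κ) (c : X → Bool)
    (mm : ℕ) (hmm : ∀ k, (univ.filter (fun x => p x ∧ key x = k)).card ≤ mm)
    (s D : ℝ) (hs : 0 < s) (hD : 0 < D)
    (hD2 : (mm : ℝ) * ((univ.filter p).card : ℝ) / 4 ≤ D) :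
    ((univ.filter (fun w : κ → Bool =>
        ((univ.filter (fun x => p x ∧ w (key x) ≠ c x)).card : ℝ)
          ≤ ((univ.filter p).card : ℝ) / 2 - s)).card : ℝ) ≤
      (Fintype.card (κ → Bool) : ℝ) * Real.exp (-(s ^ 2) / (2 * D)) := by
  classical
  set N : κ → Bool → ℕ := fun k v => (univ.filter (fun x => p x ∧ key x = k ∧ c x ≠ v)).card with hN
  set m : κ → ℕ := fun k => (univ.filter (fun x => p x ∧ key x = k)).card with hm
  set d : κ → ℝ := fun k => (N k true : ℝ) - (m k : ℝ) / 2 with hd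
  -- (b) : N k true + N k false = m k
  have hb : ∀ k, N k true + N k false = m k := by
    intro k
    show (univ.filter (fun x => p x ∧ key x = k ∧ c x ≠ true)).card +
        (univ.filter (fun x => p x ∧ key x = k ∧ c x ≠ false)).card =
        (univ.filter (fun x => p x ∧ key x = k)).card
    have e1 : (univ.filter (fun x => p x ∧ key x = k ∧ c x ≠ true)) =
        (univ.filter (fun x => p x ∧ key x = k)).filter (fun x => ¬ (c x = true)) := by
      rw [Finset.filter_filter]
      apply Finset.filter_congr
      intro x _
      tauto
    have e2 : (univ.filter (fun x => p x ∧ key x = k ∧ c x ≠ false)) =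
        (univ.filter (fun x => p x ∧ key x = k)).filter (fun x => c x = true) := by
      rw [Finset.filter_filter]
      apply Finset.filter_congr
      intro x _
      constructor
      · rintro ⟨h1, h2, h3⟩; exact ⟨⟨h1, h2⟩, by simpa using h3⟩
      · rintro ⟨⟨h1, h2⟩, h3⟩; exact ⟨h1, h2, by simp [h3]⟩
    rw [e1, e2, Nat.add_comm]
    exact Finset.card_filter_add_card_filter_not _
  -- (a) : decomposition of the count
  have ha : ∀ w : κ → Bool, (univ.filter (fun x => p x ∧ w (key x) ≠ c x)).card =
      ∑ k : κ, N k (w k) := by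
    intro w
    rw [Finset.card_eq_sum_card_fiberwise (f := key)
      (t := univ) (fun x _ => Finset.mem_univ _)]
    refine Finset.sum_congr rfl fun k _ => ?_
    show _ = (univ.filter (fun x => p x ∧ key x = k ∧ c x ≠ w k)).card
    rw [Finset.filter_filter]
    congr 1
    apply Finset.filter_congr
    intro x _
    constructor
    · rintro ⟨⟨h1, h2⟩, h3⟩; subst h3; exact ⟨h1, rfl, Ne.symm h2⟩
    · rintro ⟨h1, h2, h3⟩; subst h2; exact ⟨⟨h1, Ne.symm h3⟩, rfl⟩
  -- (c) : total
  have hc : ∑ k : κ, m k = (univ.filter p).card := by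
    rw [hm]
    rw [Finset.card_eq_sum_card_fiberwise (f := key) (s := univ.filter p)
      (t := univ) (fun x _ => Finset.mem_univ _)]
    refine Finset.sum_congr rfl fun k _ => ?_
    rw [Finset.filter_filter]
  -- (d) : real identity
  have hdw : ∀ w : κ → Bool, ((univ.filter (fun x => p x ∧ w (key x) ≠ c x)).card : ℝ) =
      ((univ.filter p).card : ℝ) / 2 + ∑ k : κ, d k * (if w k then 1 else -1) := by
    intro w
    rw [ha w, ← hc]
    push_cast
    rw [Finset.sum_div, ← Finset.sum_add_distrib]
    refine Finset.sum_congr rfl fun k _ => ?_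
    have hbk := hb k
    cases hwk : w k with
    | true => simp only [hwk, if_pos, hd]; ring
    | false =>
      have : (N k false : ℝ) = (m k : ℝ) - (N k true : ℝ) := by
        have := hb k; push_cast [← this]; ring
      simp only [hwk, hd]
      rw [if_neg (by simp)]
      rw [this]
      ring
  -- (e) : variance bound
  have he : ∑ k : κ, d k ^ 2 ≤ D := by
    refine le_trans (Finset.sum_le_sum (f := fun k => d k ^ 2)
      (g := fun k => (mm : ℝ) * (m k : ℝ) / 4) fun k _ => ?_) ?_
    · have h1 : (0:ℝ) ≤ (N k true : ℝ) := Nat.cast_nonneg _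
      have h2 : (N k true : ℝ) ≤ (m k : ℝ) := by
        have := hb k; exact_mod_cast Nat.le.intro this
      have h3 : (m k : ℝ) ≤ (mm : ℝ) := by exact_mod_cast hmm k
      rw [hd]
      nlinarith
    · rw [← Finset.sum_div, ← Finset.mul_sum]
      have : ∑ k : κ, (m k : ℝ) = ((univ.filter p).card : ℝ) := by exact_mod_cast congrArg Nat.cast hc
      rw [this]
      exact hD2
  -- conclusion
  have hset : (univ.filter (fun w : κ → Bool =>
        ((univ.filter (fun x => p x ∧ w (key x) ≠ c x)).card : ℝ)
          ≤ ((univ.filter p).card : ℝ) / 2 - s)) =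
      (univ.filter (fun w : κ → Bool =>
        ∑ k, d k * (if w k then 1 else -1) ≤ -s)) := by
    apply Finset.filter_congr
    intro w _
    rw [hdw w]
    constructor <;> intro h <;> linarith
  rw [hset]
  exact rad_count d s D hs hD he

lemma flipAt_apply_self {n : ℕ} (x : Fin n → Bool) (ℓ : Fin n) : flipAt x ℓ ℓ = !x ℓ := by
  unfold flipAt; exact Function.update_self ℓ (!x ℓ) x

lemma flipAt_apply_ne {n : ℕ} (x : Fin n → Bool) {j ℓ : Fin n} (h : j ≠ ℓ) :
    flipAt x ℓ j = x j := by
  unfold flipAt; exact Function.update_of_ne h (!x ℓ) x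

lemma flipAt_injective {n : ℕ} (ℓ : Fin n) {x x' : Fin n → Bool}
    (h : flipAt x ℓ = flipAt x' ℓ) : x = x' := by
  funext j
  by_cases hj : j = ℓ
  · subst hj
    have := congrFun h j
    rw [flipAt_apply_self, flipAt_apply_self] at this
    exact Bool.not_inj this
  · have := congrFun h j
    rwa [flipAt_apply_ne _ hj, flipAt_apply_ne _ hj] at this

lemma good_C {n : ℕ} (f : (Fin n → Bool) → Bool) (V : Finset (Fin n)) (ℓ : Fin n)
    (hℓV : ℓ ∈ V)
    (h : 2 ^ n ≤ 5 * (univ.filter (fun x => x ℓ = false ∧ f x ≠ f (flipAt x ℓ))).card) :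
    ∃ C, DisjointBichromatic f V C ∧ (2:ℝ) ^ n / 5 ≤ (C.card : ℝ) := by
  classical
  refine ⟨(univ.filter (fun x => x ℓ = false ∧ f x ≠ f (flipAt x ℓ))).map
    ⟨fun x => (x, ℓ), fun a b hab => congrArg Prod.fst hab⟩, ⟨?_, ?_⟩, ?_⟩
  · intro e he
    rw [Finset.mem_map] at he
    obtain ⟨x, hx, rfl⟩ := he
    rw [Finset.mem_filter] at hx
    exact ⟨hℓV, hx.2.2⟩
  · intro e he e' he' hne
    rw [Finset.mem_map] at he he'
    obtain ⟨x, hx, rfl⟩ := he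
    obtain ⟨x', hx', rfl⟩ := he'
    rw [Finset.mem_filter] at hx hx'
    show x ≠ x' ∧ x ≠ flipAt x' ℓ ∧ flipAt x ℓ ≠ x' ∧ flipAt x ℓ ≠ flipAt x' ℓ
    have hxx' : x ≠ x' := by
      intro hcon; exact hne (by rw [hcon])
    refine ⟨hxx', ?_, ?_, ?_⟩
    · intro hcon
      have : x ℓ = flipAt x' ℓ ℓ := by rw [← hcon]
      rw [flipAt_apply_self, hx'.2.1, hx.2.1] at this
      simp at this
    · intro hcon
      have : flipAt x ℓ ℓ = x' ℓ := by rw [hcon]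
      rw [flipAt_apply_self, hx'.2.1, hx.2.1] at this
      simp at this
    · intro hcon
      exact hxx' (flipAt_injective ℓ hcon)
  · rw [Finset.card_map]
    have : (2:ℝ) ^ n ≤ 5 * ((univ.filter (fun x => x ℓ = false ∧ f x ≠ f (flipAt x ℓ))).card : ℝ) := by
      exact_mod_cast h
    linarith

lemma pSet_nonneg {ι : Type*} [DecidableEq ι] (U : Finset ι) {ρ : ℝ} (h0 : 0 ≤ ρ) (h1 : ρ ≤ 1)
    (A : Finset ι) : 0 ≤ pSet U ρ A := by
  unfold pSet
  split_ifs
  · have : (0:ℝ) ≤ 1 - ρ := by linarith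
    positivity
  · exact le_refl 0

lemma pSet_sum {ι : Type*} [DecidableEq ι] [Fintype ι] (U : Finset ι) (ρ : ℝ) :
    ∑ B : Finset ι, pSet U ρ B = 1 := by
  classical
  unfold pSet
  rw [Finset.sum_ite, Finset.sum_const_zero, add_zero]
  have hfil : (univ : Finset (Finset ι)).filter (fun B => B ⊆ U) = U.powerset := by
    ext B; simp [Finset.mem_powerset]
  rw [hfil]
  have := Finset.prod_add (fun _ : ι => ρ) (fun _ : ι => 1 - ρ) U
  simp only [add_sub_cancel, Finset.prod_const, one_pow] at this
  conv_rhs => rw [this]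
  refine Finset.sum_congr rfl fun B hB => ?_
  rw [Finset.card_sdiff_of_subset (Finset.mem_powerset.mp hB)]

section Bad
variable {n : ℕ}

def splitEquiv (ℓ : Fin n) :
    (({k : (Fin n → Bool) × (Fin n → Bool) // k.1 ℓ = true} → Bool) ×
     ({k : (Fin n → Bool) × (Fin n → Bool) // ¬ k.1 ℓ = true} → Bool)) ≃
    ((Fin n → Bool) → (Fin n → Bool) → Bool) where
  toFun wu i j := if h : i ℓ = true then wu.1 ⟨(i, j), h⟩ else wu.2 ⟨(i, j), h⟩
  invFun z := (fun k => z k.1.1 k.1.2, fun k => z k.1.1 k.1.2)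
  left_inv wu := by
    refine Prod.ext ?_ ?_ <;> funext k <;> simp only
    · rw [dif_pos k.2]
    · rw [dif_neg k.2]
  right_inv z := by
    funext i j
    by_cases h : i ℓ = true <;> simp [h]

lemma splitEquiv_apply_false (ℓ : Fin n)
    (w : {k : (Fin n → Bool) × (Fin n → Bool) // k.1 ℓ = true} → Bool)
    (u : {k : (Fin n → Bool) × (Fin n → Bool) // ¬ k.1 ℓ = true} → Bool)
    (i j : Fin n → Bool) (h : ¬ i ℓ = true) :
    splitEquiv ℓ (w, u) i j = u ⟨(i, j), h⟩ := by
  show (if hh : i ℓ = true then w ⟨(i, j), hh⟩ else u ⟨(i, j), hh⟩) = _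
  rw [dif_neg h]

lemma splitEquiv_apply_true (ℓ : Fin n)
    (w : {k : (Fin n → Bool) × (Fin n → Bool) // k.1 ℓ = true} → Bool)
    (u : {k : (Fin n → Bool) × (Fin n → Bool) // ¬ k.1 ℓ = true} → Bool)
    (i j : Fin n → Bool) (h : i ℓ = true) :
    splitEquiv ℓ (w, u) i j = w ⟨(i, j), h⟩ := by
  show (if hh : i ℓ = true then w ⟨(i, j), hh⟩ else u ⟨(i, j), hh⟩) = _
  rw [dif_pos h]

variable (M : Finset (Fin n)) (S : (Fin n → Bool) → Finset (Fin n)) (ℓ : Fin n)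

def keyF (hℓ : ℓ ∈ M) (x : Fin n → Bool) :
    {k : (Fin n → Bool) × (Fin n → Bool) // k.1 ℓ = true} :=
  ⟨(padTo M (Function.update x ℓ true),
    padTo (S (padTo M (Function.update x ℓ true))) (Function.update x ℓ true)),
   by simp [padTo, hℓ]⟩

def cF (hℓ : ℓ ∈ M) (u : {k : (Fin n → Bool) × (Fin n → Bool) // ¬ k.1 ℓ = true} → Bool)
    (x : Fin n → Bool) : Bool :=
  u ⟨(padTo M (Function.update x ℓ false),
    padTo (S (padTo M (Function.update x ℓ false))) (Function.update x ℓ false)),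
   by simp [padTo, hℓ]⟩

set_option maxHeartbeats 1000000 in
lemma badcount (hℓ : ℓ ∈ M) :
    ((univ.filter (fun z : (Fin n → Bool) → (Fin n → Bool) → Bool =>
        5 * (univ.filter (fun x => x ℓ = false ∧
          buildF M S z x ≠ buildF M S z (flipAt x ℓ))).card < 2 ^ n)).card : ℝ) ≤
      (Fintype.card ((Fin n → Bool) → (Fin n → Bool) → Bool) : ℝ) *
        Real.exp (-((2:ℝ) ^ M.card / 100)) := by
  classical
  have hMn : M.card ≤ n := by simpa using Finset.card_le_univ M
  have hcardP : Fintype.card (Fin n → Bool) = 2 ^ n := by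
    rw [Fintype.card_fun, Fintype.card_bool, Fintype.card_fin]
  -- half count
  have hhalf : 2 * ((univ.filter (fun x : Fin n → Bool => x ℓ = false)).card) = 2 ^ n := by
    have hbij : (univ.filter (fun x : Fin n → Bool => x ℓ = false)).card =
        (univ.filter (fun x : Fin n → Bool => ¬ x ℓ = false)).card := by
      apply Finset.card_bij' (fun x _ => flipAt x ℓ) (fun x _ => flipAt x ℓ)
      · intro x hx
        rw [Finset.mem_filter] at hx ⊢
        refine ⟨Finset.mem_univ _, ?_⟩
        rw [flipAt_apply_self, hx.2]
        simp
      · intro x hx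
        rw [Finset.mem_filter] at hx ⊢
        refine ⟨Finset.mem_univ _, ?_⟩
        rw [flipAt_apply_self]
        simp only [Bool.not_eq_false] at hx
        rw [hx.2]
        rfl
      · intro x _
        funext j
        by_cases hj : j = ℓ
        · subst hj; rw [flipAt_apply_self, flipAt_apply_self]; simp
        · rw [flipAt_apply_ne _ hj, flipAt_apply_ne _ hj]
      · intro x _
        funext j
        by_cases hj : j = ℓ
        · subst hj; rw [flipAt_apply_self, flipAt_apply_self]; simp
        · rw [flipAt_apply_ne _ hj, flipAt_apply_ne _ hj]
    have hpart := Finset.card_filter_add_card_filter_not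
      (s := (univ : Finset (Fin n → Bool))) (p := fun x : Fin n → Bool => x ℓ = false)
    rw [← hbij] at hpart
    rw [Finset.card_univ, hcardP] at hpart
    rw [two_mul]
    exact hpart
  -- transfer of the count for fixed (w, u)
  have hcnt : ∀ (w : {k : (Fin n → Bool) × (Fin n → Bool) // k.1 ℓ = true} → Bool)
      (u : {k : (Fin n → Bool) × (Fin n → Bool) // ¬ k.1 ℓ = true} → Bool),
      (univ.filter (fun x : Fin n → Bool => x ℓ = false ∧
          buildF M S (splitEquiv ℓ (w, u)) x ≠ buildF M S (splitEquiv ℓ (w, u)) (flipAt x ℓ))) =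
      (univ.filter (fun x : Fin n → Bool => x ℓ = false ∧
          w (keyF M S ℓ hℓ x) ≠ cF M S ℓ hℓ u x)) := by
    intro w u
    ext x
    simp only [Finset.mem_filter, Finset.mem_univ, true_and]
    refine and_congr_right fun hx => ?_
    have hupf : Function.update x ℓ false = x := by
      rw [← hx]; exact Function.update_eq_self ℓ x
    have hupt : flipAt x ℓ = Function.update x ℓ true := by
      unfold flipAt; rw [hx]; rfl
    have hp1 : ¬ ((padTo M x) ℓ = true) := by simp [padTo, hℓ, hx]
    have hp2 : (padTo M (flipAt x ℓ)) ℓ = true := by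
      simp [padTo, hℓ, flipAt_apply_self, hx]
    have e1 : buildF M S (splitEquiv ℓ (w, u)) x = cF M S ℓ hℓ u x := by
      show splitEquiv ℓ (w, u) (padTo M x) (padTo (S (padTo M x)) x) = _
      rw [splitEquiv_apply_false ℓ w u _ _ hp1]
      unfold cF
      simp only [hupf]
    have e2 : buildF M S (splitEquiv ℓ (w, u)) (flipAt x ℓ) = w (keyF M S ℓ hℓ x) := by
      show splitEquiv ℓ (w, u) (padTo M (flipAt x ℓ))
        (padTo (S (padTo M (flipAt x ℓ))) (flipAt x ℓ)) = _
      rw [splitEquiv_apply_true ℓ w u _ _ hp2]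
      unfold keyF
      simp only [hupt]
    rw [e1, e2]
    exact ne_comm
  -- fiber bound
  have hfib : ∀ k, (univ.filter (fun x : Fin n → Bool =>
      x ℓ = false ∧ keyF M S ℓ hℓ x = k)).card ≤ 2 ^ (n - M.card) := by
    intro k
    have htarget : (2 : ℕ) ^ (n - M.card) =
        (univ : Finset ((Mᶜ : Finset (Fin n)) → Bool)).card := by
      rw [Finset.card_univ, Fintype.card_fun, Fintype.card_bool, Fintype.card_coe,
        Finset.card_compl, Fintype.card_fin]
    rw [htarget]
    apply Finset.card_le_card_of_injOn (fun x (j : (Mᶜ : Finset (Fin n))) => x j.1)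
      (fun x _ => Finset.mem_univ _)
    intro x hx x' hx' heq
    rw [Finset.coe_filter] at hx hx'
    simp only [Set.mem_setOf_eq] at hx hx'
    have hkey : padTo M (Function.update x ℓ true) = padTo M (Function.update x' ℓ true) := by
      have := congrArg (fun k => k.1.1) (hx.2.2.trans hx'.2.2.symm)
      exact this
    funext j
    by_cases hjM : j ∈ M
    · have hth := congrFun hkey j
      simp only [padTo, if_pos hjM] at hth
      by_cases hj : j = ℓ
      · subst hj; rw [hx.2.1, hx'.2.1]
      · rwa [Function.update_of_ne hj, Function.update_of_ne hj] at hth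
    · exact congrFun heq ⟨j, by simp [hjM]⟩
  -- totals as reals
  have hT : ((univ.filter (fun x : Fin n → Bool => x ℓ = false)).card : ℝ) = 2 ^ n / 2 := by
    have h2 : ((2 * (univ.filter (fun x : Fin n → Bool => x ℓ = false)).card : ℕ) : ℝ)
        = ((2 ^ n : ℕ) : ℝ) := by exact_mod_cast congrArg Nat.cast hhalf
    push_cast at h2
    linarith
  set sR : ℝ := (2:ℝ) ^ n / 20 with hsR
  set DR : ℝ := (2:ℝ) ^ (n - M.card) * (2:ℝ) ^ n / 8 with hDR
  have hsRpos : 0 < sR := by positivity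
  have hDRpos : 0 < DR := by positivity
  have hsplit2 : (2:ℝ) ^ (n - M.card) * (2:ℝ) ^ M.card = 2 ^ n := by
    rw [← pow_add, Nat.sub_add_cancel hMn]
  have hexp : -(sR ^ 2) / (2 * DR) = -((2:ℝ) ^ M.card / 100) := by
    rw [hsR, hDR, ← hsplit2]
    have hpos : (0:ℝ) < 2 ^ (n - M.card) := by positivity
    field_simp
    ring
  -- per-u bound
  have perU : ∀ u : {k : (Fin n → Bool) × (Fin n → Bool) // ¬ k.1 ℓ = true} → Bool,
      ((univ.filter (fun w : {k : (Fin n → Bool) × (Fin n → Bool) // k.1 ℓ = true} → Bool =>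
        5 * (univ.filter (fun x : Fin n → Bool => x ℓ = false ∧
          buildF M S (splitEquiv ℓ (w, u)) x ≠
            buildF M S (splitEquiv ℓ (w, u)) (flipAt x ℓ))).card < 2 ^ n)).card : ℝ) ≤
      (Fintype.card ({k : (Fin n → Bool) × (Fin n → Bool) // k.1 ℓ = true} → Bool) : ℝ) *
        Real.exp (-((2:ℝ) ^ M.card / 100)) := by
    intro u
    rw [← hexp]
    have hsub : (univ.filter (fun w : {k : (Fin n → Bool) × (Fin n → Bool) // k.1 ℓ = true} → Bool =>
        5 * (univ.filter (fun x : Fin n → Bool => x ℓ = false ∧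
          buildF M S (splitEquiv ℓ (w, u)) x ≠
            buildF M S (splitEquiv ℓ (w, u)) (flipAt x ℓ))).card < 2 ^ n)) ⊆
        (univ.filter (fun w : {k : (Fin n → Bool) × (Fin n → Bool) // k.1 ℓ = true} → Bool =>
          ((univ.filter (fun x : Fin n → Bool => x ℓ = false ∧
            w (keyF M S ℓ hℓ x) ≠ cF M S ℓ hℓ u x)).card : ℝ) ≤
          ((univ.filter (fun x : Fin n → Bool => x ℓ = false)).card : ℝ) / 2 - sR)) := by
      apply Finset.monotone_filter_right
      intro w _ hw
      rw [hcnt w u] at hw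
      have h5 : 5 * (univ.filter (fun x : Fin n → Bool => x ℓ = false ∧
          w (keyF M S ℓ hℓ x) ≠ cF M S ℓ hℓ u x)).card ≤ 2 ^ n := hw.le
      have h5R : (5:ℝ) * ((univ.filter (fun x : Fin n → Bool => x ℓ = false ∧
          w (keyF M S ℓ hℓ x) ≠ cF M S ℓ hℓ u x)).card : ℝ) ≤ (2:ℝ) ^ n := by
        exact_mod_cast h5
      rw [hT, hsR]
      linarith
    have hD2' : ((2 ^ (n - M.card) : ℕ) : ℝ) *
        ((univ.filter (fun x : Fin n → Bool => x ℓ = false)).card : ℝ) / 4 ≤ DR := by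
      rw [hT, hDR]
      push_cast
      apply le_of_eq
      ring
    have hcm := count_main (fun x : Fin n → Bool => x ℓ = false)
      (keyF M S ℓ hℓ) (cF M S ℓ hℓ u) (2 ^ (n - M.card)) hfib sR DR hsRpos hDRpos hD2'
    exact le_trans (Nat.cast_le.mpr (Finset.card_le_card hsub)) hcm
  -- global assembly
  have hsum : (univ.filter (fun z : (Fin n → Bool) → (Fin n → Bool) → Bool =>
        5 * (univ.filter (fun x => x ℓ = false ∧
          buildF M S z x ≠ buildF M S z (flipAt x ℓ))).card < 2 ^ n)).card =
      ∑ u : {k : (Fin n → Bool) × (Fin n → Bool) // ¬ k.1 ℓ = true} → Bool,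
        (univ.filter (fun w : {k : (Fin n → Bool) × (Fin n → Bool) // k.1 ℓ = true} → Bool =>
          5 * (univ.filter (fun x : Fin n → Bool => x ℓ = false ∧
            buildF M S (splitEquiv ℓ (w, u)) x ≠
              buildF M S (splitEquiv ℓ (w, u)) (flipAt x ℓ))).card < 2 ^ n)).card := by
    rw [Finset.card_filter]
    rw [← Equiv.sum_comp (splitEquiv ℓ) (fun z => if
        5 * (univ.filter (fun x => x ℓ = false ∧
          buildF M S z x ≠ buildF M S z (flipAt x ℓ))).card < 2 ^ n then 1 else 0)]
    rw [Fintype.sum_prod_type]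
    rw [Finset.sum_comm]
    refine Finset.sum_congr rfl fun u _ => ?_
    rw [Finset.card_filter]
  rw [hsum]
  push_cast
  calc ∑ u : {k : (Fin n → Bool) × (Fin n → Bool) // ¬ k.1 ℓ = true} → Bool,
      ((univ.filter (fun w : {k : (Fin n → Bool) × (Fin n → Bool) // k.1 ℓ = true} → Bool =>
        5 * (univ.filter (fun x : Fin n → Bool => x ℓ = false ∧
          buildF M S (splitEquiv ℓ (w, u)) x ≠
            buildF M S (splitEquiv ℓ (w, u)) (flipAt x ℓ))).card < 2 ^ n)).card : ℝ)
      ≤ ∑ u : {k : (Fin n → Bool) × (Fin n → Bool) // ¬ k.1 ℓ = true} → Bool,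
        (Fintype.card ({k : (Fin n → Bool) × (Fin n → Bool) // k.1 ℓ = true} → Bool) : ℝ) *
          Real.exp (-((2:ℝ) ^ M.card / 100)) := Finset.sum_le_sum fun u _ => perU u
    _ = (Fintype.card ((Fin n → Bool) → (Fin n → Bool) → Bool) : ℝ) *
        Real.exp (-((2:ℝ) ^ M.card / 100)) := by
      have hcards : (Fintype.card ({k : (Fin n → Bool) × (Fin n → Bool) // k.1 ℓ = true} → Bool)) *
          (Fintype.card ({k : (Fin n → Bool) × (Fin n → Bool) // ¬ k.1 ℓ = true} → Bool)) =
          Fintype.card ((Fin n → Bool) → (Fin n → Bool) → Bool) := by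
        rw [← Fintype.card_prod]
        exact Fintype.card_congr (splitEquiv ℓ)
      rw [Finset.sum_const, Finset.card_univ, nsmul_eq_mul, ← mul_assoc, ← Nat.cast_mul,
        mul_comm (Fintype.card ({k : (Fin n → Bool) × (Fin n → Bool) // ¬ k.1 ℓ = true} → Bool)),
        hcards]

end Bad

lemma sum_ind_ge {Z : Type*} [Fintype Z] [DecidableEq Z] (Epred : Z → Prop) (inst : ∀ z, Decidable (Epred z))
    (q : Z → Prop) [DecidablePred q] (himp : ∀ z, ¬ q z → Epred z) :
    (Fintype.card Z : ℝ) - ((univ.filter q).card : ℝ) ≤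
      ∑ z : Z, (if Epred z then (1:ℝ) else 0) := by
  have h1 : ∀ z : Z, (if q z then (0:ℝ) else 1) ≤ (if Epred z then (1:ℝ) else 0) := by
    intro z
    by_cases hq : q z
    · rw [if_pos hq]
      split_ifs <;> norm_num
    · rw [if_neg hq, if_pos (himp z hq)]
  have h2 : (univ.filter (fun z : Z => ¬ q z)).card =
      Fintype.card Z - (univ.filter q).card := by
    rw [Finset.filter_not, Finset.card_sdiff_of_subset (Finset.filter_subset _ _), Finset.card_univ]
  have h3 : (univ.filter q).card ≤ Fintype.card Z :=
    le_trans (Finset.card_le_card (Finset.filter_subset _ _)) (le_of_eq Finset.card_univ)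
  calc (Fintype.card Z : ℝ) - ((univ.filter q).card : ℝ)
      = ∑ z : Z, (if q z then (0:ℝ) else 1) := by
        rw [Finset.sum_ite, Finset.sum_const, Finset.sum_const]
        simp only [smul_zero, zero_add, nsmul_eq_mul, mul_one]
        rw [h2, Nat.cast_sub h3]
    _ ≤ _ := Finset.sum_le_sum fun z _ => h1 z

set_option maxHeartbeats 1000000 in
lemma prSH_bound {n : ℕ} (M A V : Finset (Fin n)) {ρ : ℝ} (hρ0 : 0 ≤ ρ) (hρ1 : ρ ≤ 1)
    (ℓ : Fin n) (hℓV : ℓ ∈ V) (hℓM : ℓ ∈ M) :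
    1 - Real.exp (-((2:ℝ) ^ M.card / 100)) ≤
      prSH n M A ρ (fun f => ∃ C, DisjointBichromatic f V C ∧
        (2:ℝ) ^ n / 5 ≤ (C.card : ℝ)) := by
  classical
  have hcZpos : 0 < ((Fintype.card ((Fin n → Bool) → (Fin n → Bool) → Bool)) : ℝ) := by
    exact_mod_cast Fintype.card_pos
  have hS1 : ∑ S : (Fin n → Bool) → Finset (Fin n), ∏ y : Fin n → Bool, pSet A ρ (S y) = 1 := by
    rw [← Fintype.prod_sum (fun (_ : Fin n → Bool) (B : Finset (Fin n)) => pSet A ρ B)]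
    rw [Finset.prod_congr rfl fun y _ => pSet_sum A ρ]
    exact Finset.prod_const_one
  unfold prSH
  have h1 : (1:ℝ) - Real.exp (-((2:ℝ) ^ M.card / 100)) =
      ∑ S : (Fin n → Bool) → Finset (Fin n),
        (1 - Real.exp (-((2:ℝ) ^ M.card / 100))) * ∏ y : Fin n → Bool, pSet A ρ (S y) := by
    rw [← Finset.mul_sum, hS1, mul_one]
  rw [h1]
  refine Finset.sum_le_sum fun S _ => ?_
  have hW : 0 ≤ ∏ y : Fin n → Bool, pSet A ρ (S y) :=
    Finset.prod_nonneg fun y _ => pSet_nonneg A hρ0 hρ1 (S y)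
  simp only [mul_div_assoc]
  rw [← Finset.sum_mul]
  rw [show (1 - Real.exp (-((2:ℝ) ^ M.card / 100))) * (∏ y : Fin n → Bool, pSet A ρ (S y)) =
    (((Fintype.card ((Fin n → Bool) → (Fin n → Bool) → Bool)) : ℝ) *
      (1 - Real.exp (-((2:ℝ) ^ M.card / 100)))) *
      ((∏ y : Fin n → Bool, pSet A ρ (S y)) /
        ((Fintype.card ((Fin n → Bool) → (Fin n → Bool) → Bool)) : ℝ)) from by
    field_simp]
  refine mul_le_mul_of_nonneg_right ?_ (by positivity)
  refine le_trans ?_ (sum_ind_ge _ _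
    (fun z : (Fin n → Bool) → (Fin n → Bool) → Bool =>
      5 * (univ.filter (fun x => x ℓ = false ∧
        buildF M S z x ≠ buildF M S z (flipAt x ℓ))).card < 2 ^ n)
    (fun z hz => good_C (buildF M S z) V ℓ hℓV (Nat.le_of_not_lt hz)))
  have hbc := badcount M S ℓ hℓM
  nlinarith [Real.exp_nonneg (-((2:ℝ) ^ M.card / 100))]

lemma numeric_bound {c : ℝ} (hc : 0 < c) : ∃ n₀ : ℕ, 1 ≤ n₀ ∧
    ∀ n : ℕ, n₀ ≤ n → Real.sqrt n * Real.logb 2 n + 8 ≤ c * n := by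
  refine ⟨⌈(14 / c) ^ 4⌉₊ + 1, le_add_self, fun n hn => ?_⟩
  have hn1 : (1:ℝ) ≤ (n:ℝ) := by
    have : 1 ≤ n := le_trans (Nat.le_add_left 1 _) hn
    exact_mod_cast this
  have hn0 : (0:ℝ) < (n:ℝ) := lt_of_lt_of_le zero_lt_one hn1
  have hq0 : (0:ℝ) < 14 / c := by positivity
  have hnq : ((14 / c) ^ 4 : ℝ) ≤ (n:ℝ) := by
    refine le_trans (Nat.le_ceil _) ?_
    exact_mod_cast le_trans (Nat.le_succ _) hn
  -- quarter power facts
  have hq14 : ((14 / c) ^ 4 : ℝ) ^ ((1:ℝ)/4) = 14 / c := by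
    rw [← Real.rpow_natCast (14 / c) 4, ← Real.rpow_mul hq0.le]
    norm_num
  have hquarter : (14 / c : ℝ) ≤ (n:ℝ) ^ ((1:ℝ)/4) := by
    rw [← hq14]
    exact Real.rpow_le_rpow (by positivity) hnq (by norm_num)
  have h14 : (14:ℝ) ≤ c * (n:ℝ) ^ ((1:ℝ)/4) := by
    have := mul_le_mul_of_nonneg_left hquarter hc.le
    rwa [mul_div_cancel₀ 14 (ne_of_gt hc)] at this
  have hq4pos : (0:ℝ) < (n:ℝ) ^ ((1:ℝ)/4) := Real.rpow_pos_of_pos hn0 _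
  -- log bound
  have hlog : Real.log n ≤ 4 * (n:ℝ) ^ ((1:ℝ)/4) := by
    have h1 : Real.log ((n:ℝ) ^ ((1:ℝ)/4)) = (1/4) * Real.log n := Real.log_rpow hn0 _
    have h2 : Real.log ((n:ℝ) ^ ((1:ℝ)/4)) ≤ (n:ℝ) ^ ((1:ℝ)/4) - 1 :=
      Real.log_le_sub_one_of_pos hq4pos
    nlinarith
  have hlogb : Real.logb 2 n ≤ 6 * (n:ℝ) ^ ((1:ℝ)/4) := by
    have hl2 : (0.6931471803 : ℝ) < Real.log 2 := Real.log_two_gt_d9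
    rw [Real.logb, div_le_iff₀ (by linarith : (0:ℝ) < Real.log 2)]
    nlinarith
  -- power algebra
  have hsqrt : Real.sqrt n = (n:ℝ) ^ ((1:ℝ)/2) := Real.sqrt_eq_rpow _
  have hmul : (n:ℝ) ^ ((1:ℝ)/2) * (n:ℝ) ^ ((1:ℝ)/4) = (n:ℝ) ^ ((3:ℝ)/4) := by
    rw [← Real.rpow_add hn0]
    norm_num
  have hfull : (n:ℝ) ^ ((1:ℝ)/4) * (n:ℝ) ^ ((3:ℝ)/4) = (n:ℝ) := by
    rw [← Real.rpow_add hn0]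
    norm_num
  have h34one : (1:ℝ) ≤ (n:ℝ) ^ ((3:ℝ)/4) := by
    calc (1:ℝ) = (1:ℝ) ^ ((3:ℝ)/4) := (Real.one_rpow _).symm
      _ ≤ (n:ℝ) ^ ((3:ℝ)/4) := Real.rpow_le_rpow zero_le_one hn1 (by norm_num)
  have hsq0 : (0:ℝ) ≤ (n:ℝ) ^ ((1:ℝ)/2) := (Real.rpow_pos_of_pos hn0 _).le
  have h34pos : (0:ℝ) ≤ (n:ℝ) ^ ((3:ℝ)/4) := by linarith
  -- combine
  have hA : Real.sqrt n * Real.logb 2 n ≤ 6 * (n:ℝ) ^ ((3:ℝ)/4) := by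
    rw [hsqrt]
    calc (n:ℝ) ^ ((1:ℝ)/2) * Real.logb 2 n
        ≤ (n:ℝ) ^ ((1:ℝ)/2) * (6 * (n:ℝ) ^ ((1:ℝ)/4)) :=
          mul_le_mul_of_nonneg_left hlogb hsq0
      _ = 6 * ((n:ℝ) ^ ((1:ℝ)/2) * (n:ℝ) ^ ((1:ℝ)/4)) := by ring
      _ = 6 * (n:ℝ) ^ ((3:ℝ)/4) := by rw [hmul]
  have hB : (14:ℝ) * (n:ℝ) ^ ((3:ℝ)/4) ≤ c * (n:ℝ) := by
    calc (14:ℝ) * (n:ℝ) ^ ((3:ℝ)/4) ≤ (c * (n:ℝ) ^ ((1:ℝ)/4)) * (n:ℝ) ^ ((3:ℝ)/4) :=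
        mul_le_mul_of_nonneg_right h14 h34pos
      _ = c * ((n:ℝ) ^ ((1:ℝ)/4) * (n:ℝ) ^ ((3:ℝ)/4)) := by ring
      _ = c * (n:ℝ) := by rw [hfull]
  nlinarith

theorem stmt5 (α : ℝ) (hα₁ : 1 / 2 < α) (hα₂ : α < 1) :
    ∃ (c : ℝ) (n₀ : ℕ), 0 < c ∧
      ∀ (n : ℕ) (ε : ℝ) (M A V : Finset (Fin n)),
        n₀ ≤ n →
        0 < ε → ε ≤ 1 / 6 →
        ∀ m t : ℕ,
          m = ⌈2 * (1 - α) * (n : ℝ) + (1 - α) * Real.sqrt n * Real.logb 2 n⌉₊ →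
          t = n - m →
          M.card = t → A ⊆ Mᶜ →
          V ⊆ M ∪ A → (V ∩ M).Nonempty →
          1 - Real.exp (-(2 : ℝ) ^ (c * n)) ≤
            prSH n M A (ε / Real.sqrt n)
              (fun f => ∃ C, DisjointBichromatic f V C ∧ (2 : ℝ) ^ n / 5 ≤ (C.card : ℝ)) := by
  have hcpos : 0 < α - 1/2 := by linarith
  obtain ⟨n₀, hn₀1, hnum⟩ := numeric_bound hcpos
  refine ⟨α - 1/2, n₀, hcpos, ?_⟩
  intro n ε M A V hn hε hε6 m t hm ht hM hA hV hVM
  obtain ⟨ℓ, hℓ⟩ := hVM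
  rw [Finset.mem_inter] at hℓ
  have hℓV : ℓ ∈ V := hℓ.1
  have hℓM : ℓ ∈ M := hℓ.2
  -- basic positivity
  have hn1 : (1:ℝ) ≤ (n:ℝ) := by exact_mod_cast le_trans hn₀1 hn
  have hn0 : (0:ℝ) < (n:ℝ) := lt_of_lt_of_le zero_lt_one hn1
  have hsqrt1 : (1:ℝ) ≤ Real.sqrt n := by
    rw [show (1:ℝ) = Real.sqrt 1 from Real.sqrt_one.symm]
    exact Real.sqrt_le_sqrt hn1
  have hsqrt0 : (0:ℝ) < Real.sqrt n := lt_of_lt_of_le zero_lt_one hsqrt1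
  have hρ0 : 0 ≤ ε / Real.sqrt n := div_nonneg hε.le hsqrt0.le
  have hρ1 : ε / Real.sqrt n ≤ 1 := by
    rw [div_le_one hsqrt0]
    linarith
  have hL0 : 0 ≤ Real.logb 2 n := Real.logb_nonneg (by norm_num) hn1
  have hsL0 : 0 ≤ Real.sqrt n * Real.logb 2 n := mul_nonneg hsqrt0.le hL0
  have hnumn : Real.sqrt n * Real.logb 2 n + 8 ≤ (α - 1/2) * n := hnum n hn
  -- bound m
  have hδ0 : (0:ℝ) ≤ 1 - α := by linarith
  have hδh : (1:ℝ) - α ≤ 1/2 := by linarith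
  have hargnn : (0:ℝ) ≤ 2 * (1 - α) * (n:ℝ) + (1 - α) * Real.sqrt n * Real.logb 2 n := by
    have : (0:ℝ) ≤ (1 - α) * Real.sqrt n * Real.logb 2 n := by positivity
    nlinarith
  have hmlt : (m:ℝ) < 2 * (1 - α) * (n:ℝ) + (1 - α) * Real.sqrt n * Real.logb 2 n + 1 := by
    rw [hm]
    exact Nat.ceil_lt_add_one hargnn
  have hhalfterm : (1 - α) * Real.sqrt n * Real.logb 2 n ≤
      (Real.sqrt n * Real.logb 2 n) / 2 := by nlinarith
  have hmlt2 : (m:ℝ) < 2 * (1 - α) * (n:ℝ) + (α - 1/2) * (n:ℝ) / 2 - 3 := by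
    have : Real.sqrt n * Real.logb 2 n ≤ (α - 1/2) * n - 8 := by linarith
    linarith
  have hcn8 : 8 ≤ (α - 1/2) * (n:ℝ) := by linarith
  have htwoδ : 2 * (1 - α) * (n:ℝ) = (n:ℝ) - 2 * ((α - 1/2) * (n:ℝ)) := by ring
  have hmltn : (m:ℝ) < (n:ℝ) := by
    rw [htwoδ] at hmlt2
    linarith
  have hmn : m ≤ n := by exact_mod_cast hmltn.le
  have htR : (t:ℝ) = (n:ℝ) - (m:ℝ) := by
    rw [ht]
    push_cast [Nat.cast_sub hmn]
    ring
  have htge : (α - 1/2) * (n:ℝ) + 7 ≤ (t:ℝ) := by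
    rw [htR]
    rw [htwoδ] at hmlt2
    linarith
  -- compare exponentials
  have hpow : (2:ℝ) ^ ((α - 1/2) * (n:ℝ)) ≤ (2:ℝ) ^ t / 100 := by
    have h1 : (2:ℝ) ^ ((α - 1/2) * (n:ℝ)) ≤ (2:ℝ) ^ ((t:ℝ) - 7) :=
      (Real.rpow_le_rpow_left_iff one_lt_two).mpr (by linarith)
    have h7 : (2:ℝ) ^ (((7:ℕ)):ℝ) = 128 := by
      rw [Real.rpow_natCast]; norm_num
    have h2 : (2:ℝ) ^ ((t:ℝ) - 7) = (2:ℝ) ^ t / 128 := by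
      rw [Real.rpow_sub two_pos, Real.rpow_natCast,
        show ((7:ℝ)) = (((7:ℕ)):ℝ) by norm_num, h7]
    have h3 : (2:ℝ) ^ t / 128 ≤ (2:ℝ) ^ t / 100 := by
      have hp : (0:ℝ) ≤ (2:ℝ) ^ t := by positivity
      rw [div_le_div_iff₀ (by norm_num) (by norm_num)]
      linarith
    rw [h2] at h1
    linarith
  have hexp : Real.exp (-((2:ℝ) ^ M.card / 100)) ≤ Real.exp (-(2:ℝ) ^ ((α - 1/2) * (n:ℝ))) := by
    apply Real.exp_le_exp.mpr
    rw [hM]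
    linarith
  have hbound := prSH_bound M A V hρ0 hρ1 ℓ hℓV hℓM
  calc 1 - Real.exp (-(2:ℝ) ^ ((α - 1/2) * (n:ℝ)))
      ≤ 1 - Real.exp (-((2:ℝ) ^ M.card / 100)) := by linarith
    _ ≤ _ := hbound
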